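/- Let B be an n×n complex matrix whose singular values satisfy s_{n−i}(B) ≥ ci/n for all i ≥ Ck (where n > k ≥ 1 and c, C > 0 are constants), and let w = i·(k/n) be purely imaginary. Then the imaginary part of the Stieltjes transform m_w := (1/(2n))·tr((H − w·Id_{2n})^{-1}), where H is the Hermitization [[0, B],[B*, 0]], satisfies Im(m_w) = (1/(2n)) Σ_{i=1}^n 2·Im(w)/(|w|² + s_i(B)²) ≤ C', where C' depends only on c and C. -/

import Mathlib

open Matrix


open Matrix

lemma aux_inv_trace {n : ℕ} (A : Matrix (Fin n) (Fin n) ℂ) (t : ℝ) (ht : 0 < t) :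
    (Aᴴ * A + (t^2 : ℂ) • 1) * (Aᴴ * A + (t^2 : ℂ) • 1)⁻¹ = 1 ∧
    Matrix.trace (Aᴴ * A + (t^2 : ℂ) • 1)⁻¹
      = ∑ i, (((Matrix.isHermitian_conjTranspose_mul_self A).eigenvalues i : ℂ) + t^2)⁻¹ := by
  set hA := Matrix.isHermitian_conjTranspose_mul_self A with hhA
  set U : Matrix (Fin n) (Fin n) ℂ := (hA.eigenvectorUnitary : Matrix (Fin n) (Fin n) ℂ) with hU
  have hUU : U * star U = 1 := (Matrix.mem_unitaryGroup_iff).mp (hA.eigenvectorUnitary).2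
  have hUU' : star U * U = 1 := (Matrix.mem_unitaryGroup_iff').mp (hA.eigenvectorUnitary).2
  have hne : ∀ i, (hA.eigenvalues i : ℂ) + t^2 ≠ 0 := by
    intro i h
    have h1 : (0:ℝ) ≤ hA.eigenvalues i := Matrix.eigenvalues_conjTranspose_mul_self_nonneg A i
    rw [← Complex.ofReal_pow, ← Complex.ofReal_add, Complex.ofReal_eq_zero] at h
    nlinarith [sq_nonneg t]
  set D : Matrix (Fin n) (Fin n) ℂ := Matrix.diagonal (fun i => (hA.eigenvalues i : ℂ) + t^2) with hD
  set Z : Matrix (Fin n) (Fin n) ℂ :=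
    U * Matrix.diagonal (fun i => ((hA.eigenvalues i : ℂ) + t^2)⁻¹) * star U with hZ
  have hspec : Aᴴ * A + (t^2 : ℂ) • 1 = U * D * star U := by
    have h1 := hA.spectral_theorem
    have h2 : (t^2 : ℂ) • (1 : Matrix (Fin n) (Fin n) ℂ) = U * ((t^2:ℂ) • 1) * star U := by
      rw [Matrix.mul_smul, Matrix.mul_one, Matrix.smul_mul, hUU]
    calc Aᴴ * A + (t^2:ℂ) • 1 = U * Matrix.diagonal (RCLike.ofReal ∘ hA.eigenvalues) * star U
          + U * ((t^2:ℂ) • 1) * star U := by nth_rewrite 1 [h1]; rw [Unitary.conjStarAlgAut_apply, ← h2]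
      _ = U * (Matrix.diagonal (RCLike.ofReal ∘ hA.eigenvalues) + (t^2:ℂ) • 1) * star U := by
          noncomm_ring
      _ = U * D * star U := by
          rw [hD, Matrix.smul_one_eq_diagonal, Matrix.diagonal_add]
          rfl
  have hmul : (Aᴴ * A + (t^2 : ℂ) • 1) * Z = 1 := by
    rw [hspec, hZ]
    calc U * D * star U * (U * Matrix.diagonal (fun i => ((hA.eigenvalues i : ℂ) + t^2)⁻¹) * star U)
        = U * D * (star U * U) * Matrix.diagonal (fun i => ((hA.eigenvalues i : ℂ) + t^2)⁻¹) * star U := by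
          noncomm_ring
      _ = U * (D * Matrix.diagonal (fun i => ((hA.eigenvalues i : ℂ) + t^2)⁻¹)) * star U := by
          rw [hUU', Matrix.mul_one]; noncomm_ring
      _ = 1 := by
          rw [hD, Matrix.diagonal_mul_diagonal]
          have : (fun i => ((hA.eigenvalues i : ℂ) + t^2) * ((hA.eigenvalues i : ℂ) + t^2)⁻¹)
              = fun _ => (1:ℂ) := by
            funext i; exact mul_inv_cancel₀ (hne i)
          rw [this, Matrix.diagonal_one, Matrix.mul_one, hUU]
  have hinv : (Aᴴ * A + (t^2 : ℂ) • 1)⁻¹ = Z := Matrix.inv_eq_right_inv hmul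
  refine ⟨by rw [hinv]; exact hmul, ?_⟩
  rw [hinv, hZ, Matrix.trace_mul_cycle, hUU', Matrix.one_mul, Matrix.trace_diagonal]

open Matrix

lemma trace_fromBlocks' {n : ℕ} (A B C D : Matrix (Fin n) (Fin n) ℂ) :
    (Matrix.fromBlocks A B C D).trace = A.trace + D.trace := by
  simp [Matrix.trace, Matrix.diag, Fintype.sum_sum_type, Matrix.fromBlocks]

lemma aux_block {n : ℕ} (B : Matrix (Fin n) (Fin n) ℂ) (t : ℝ)
    (hX : (B * Bᴴ + (t^2:ℂ) • 1) * (B * Bᴴ + (t^2:ℂ) • 1)⁻¹ = 1)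
    (hY : (Bᴴ * B + (t^2:ℂ) • 1) * (Bᴴ * B + (t^2:ℂ) • 1)⁻¹ = 1) :
    Matrix.trace ((Matrix.fromBlocks 0 B Bᴴ 0 -
        (Complex.I * (t:ℂ)) • (1 : Matrix (Fin n ⊕ Fin n) (Fin n ⊕ Fin n) ℂ))⁻¹)
      = (Complex.I * (t:ℂ)) * (Matrix.trace (B * Bᴴ + (t^2:ℂ)•1)⁻¹
          + Matrix.trace (Bᴴ * B + (t^2:ℂ)•1)⁻¹) := by
  set w : ℂ := Complex.I * (t:ℂ) with hw
  set X := B * Bᴴ + (t^2:ℂ) • 1 with hXdef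
  set Y := Bᴴ * B + (t^2:ℂ) • 1 with hYdef
  have hw2 : -w * w = (t^2 : ℂ) := by
    rw [hw]; ring_nf; rw [Complex.I_sq]; ring
  set N : Matrix (Fin n ⊕ Fin n) (Fin n ⊕ Fin n) ℂ :=
    Matrix.fromBlocks (w • X⁻¹) (B * Y⁻¹) (Bᴴ * X⁻¹) (w • Y⁻¹) with hN
  have hM : Matrix.fromBlocks 0 B Bᴴ 0 -
      w • (1 : Matrix (Fin n ⊕ Fin n) (Fin n ⊕ Fin n) ℂ)
      = Matrix.fromBlocks ((-w) • 1) B Bᴴ ((-w) • 1) := by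
    rw [← Matrix.fromBlocks_one, Matrix.fromBlocks_smul, sub_eq_add_neg, Matrix.fromBlocks_neg,
      Matrix.fromBlocks_add]
    congr 1 <;> simp
  have e11 : (-w)•(1:Matrix (Fin n) (Fin n) ℂ)*(w•X⁻¹) + B*(Bᴴ*X⁻¹) = 1 := by
    rw [show (-w)•(1:Matrix (Fin n) (Fin n) ℂ)*(w•X⁻¹) + B*(Bᴴ*X⁻¹) = X * X⁻¹ by
      rw [Matrix.smul_mul, Matrix.one_mul, smul_smul, hw2, ← Matrix.mul_assoc, hXdef,
        Matrix.add_mul, Matrix.smul_mul, Matrix.one_mul, add_comm], hX]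
  have e22 : Bᴴ*(B*Y⁻¹) + (-w)•(1:Matrix (Fin n) (Fin n) ℂ)*(w•Y⁻¹) = 1 := by
    rw [show Bᴴ*(B*Y⁻¹) + (-w)•(1:Matrix (Fin n) (Fin n) ℂ)*(w•Y⁻¹) = Y * Y⁻¹ by
      rw [Matrix.smul_mul, Matrix.one_mul, smul_smul, hw2, ← Matrix.mul_assoc, hYdef,
        Matrix.add_mul, Matrix.smul_mul, Matrix.one_mul], hY]
  have e12 : (-w)•(1:Matrix (Fin n) (Fin n) ℂ)*(B*Y⁻¹) + B*(w•Y⁻¹) = 0 := by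
    rw [Matrix.smul_mul, Matrix.one_mul, Matrix.mul_smul, neg_smul, neg_add_cancel]
  have e21 : Bᴴ*(w•X⁻¹) + (-w)•(1:Matrix (Fin n) (Fin n) ℂ)*(Bᴴ*X⁻¹) = 0 := by
    rw [Matrix.smul_mul, Matrix.one_mul, Matrix.mul_smul, neg_smul, add_neg_cancel]
  have hmul : (Matrix.fromBlocks 0 B Bᴴ 0 -
      w • (1 : Matrix (Fin n ⊕ Fin n) (Fin n ⊕ Fin n) ℂ)) * N = 1 := by
    rw [hM, hN, Matrix.fromBlocks_multiply, e11, e12, e21, e22, Matrix.fromBlocks_one]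
  have hinv := Matrix.inv_eq_right_inv hmul
  rw [hinv, hN, trace_fromBlocks', Matrix.trace_smul, Matrix.trace_smul]
  simp only [smul_eq_mul]
  ring

open Matrix

lemma aux_trace_eq {n : ℕ} (B : Matrix (Fin n) (Fin n) ℂ) (t : ℝ) (ht : 0 < t)
    (hX : (B * Bᴴ + (t^2:ℂ) • 1) * (B * Bᴴ + (t^2:ℂ) • 1)⁻¹ = 1)
    (hY : (Bᴴ * B + (t^2:ℂ) • 1) * (Bᴴ * B + (t^2:ℂ) • 1)⁻¹ = 1) :
    Matrix.trace (B * Bᴴ + (t^2:ℂ)•1)⁻¹ = Matrix.trace (Bᴴ * B + (t^2:ℂ)•1)⁻¹ := by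
  set X := B * Bᴴ + (t^2:ℂ) • 1 with hXdef
  set Y := Bᴴ * B + (t^2:ℂ) • 1 with hYdef
  have hXd : IsUnit X.det := by
    apply Matrix.isUnit_det_of_right_inverse hX
  have hXl : X⁻¹ * X = 1 := Matrix.nonsing_inv_mul X hXd
  have hcomm : X * B = B * Y := by
    rw [hXdef, hYdef, Matrix.add_mul, Matrix.mul_add, Matrix.smul_mul, Matrix.one_mul,
      Matrix.mul_smul, Matrix.mul_one, Matrix.mul_assoc]
  have hpt : X⁻¹ * B = B * Y⁻¹ := by
    calc X⁻¹ * B = X⁻¹ * B * (Y * Y⁻¹) := by rw [hY, Matrix.mul_one]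
      _ = X⁻¹ * (B * Y) * Y⁻¹ := by noncomm_ring
      _ = X⁻¹ * (X * B) * Y⁻¹ := by rw [hcomm]
      _ = (X⁻¹ * X) * (B * Y⁻¹) := by noncomm_ring
      _ = B * Y⁻¹ := by rw [hXl, Matrix.one_mul]
  have h1 : B*Bᴴ*X⁻¹ + (t^2:ℂ)•X⁻¹ = 1 := by
    have := hX
    rw [hXdef, Matrix.add_mul, Matrix.smul_mul, Matrix.one_mul] at this
    exact this
  have h2 : Bᴴ*B*Y⁻¹ + (t^2:ℂ)•Y⁻¹ = 1 := by
    have := hY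
    rw [hYdef, Matrix.add_mul, Matrix.smul_mul, Matrix.one_mul] at this
    exact this
  have ht1 := congrArg Matrix.trace h1
  have ht2 := congrArg Matrix.trace h2
  rw [Matrix.trace_add, Matrix.trace_smul] at ht1 ht2
  have htr : Matrix.trace (B*Bᴴ*X⁻¹) = Matrix.trace (Bᴴ*B*Y⁻¹) := by
    rw [Matrix.mul_assoc, Matrix.trace_mul_comm, Matrix.mul_assoc, hpt, ← Matrix.mul_assoc]
  rw [htr] at ht1
  have hts : (t^2:ℂ) • Matrix.trace X⁻¹ = (t^2:ℂ) • Matrix.trace Y⁻¹ := by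
    have := ht1.trans ht2.symm
    linear_combination this
  have htne : (t^2 : ℂ) ≠ 0 := by
    simp only [ne_eq, ← Complex.ofReal_pow, Complex.ofReal_eq_zero]
    positivity
  simpa [smul_eq_mul, htne] using hts

lemma sorted_countP_iff {L : List ℝ} (hL : L.Pairwise (· ≥ ·)) (j : ℕ) (hj : j < L.length) (t : ℝ) :
    (j + 1 ≤ L.countP (fun x => decide (t ≤ x))) ↔ t ≤ L.get ⟨j, hj⟩ := by
  constructor
  · intro h
    by_contra hlt
    push_neg at hlt
    have hdrop : (L.drop j).countP (fun x => decide (t ≤ x)) = 0 := by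
      rw [List.countP_eq_zero]
      intro a ha
      obtain ⟨i, hi⟩ := List.mem_iff_get.mp ha
      have hd1 : (i : ℕ) < (List.drop j L).length := i.isLt
      have hd2 : (List.drop j L).length = L.length - j := List.length_drop
      have hlen : j + i.1 < L.length := by omega
      have ha2 : a = L.get ⟨j + i.1, hlen⟩ := by
        rw [show L.get ⟨j + i.1, hlen⟩ = (L.drop j).get i by simp]
        exact hi.symm
      have hle : L.get ⟨j + i.1, hlen⟩ ≤ L.get ⟨j, hj⟩ :=
        hL.rel_get_of_le (a := ⟨j, hj⟩) (b := ⟨j + i.1, hlen⟩) (by simp)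
      simp only [decide_eq_true_eq]
      rw [ha2]
      linarith
    have hsplit : L.countP (fun x => decide (t ≤ x)) =
        (L.take j).countP (fun x => decide (t ≤ x)) := by
      conv_lhs => rw [← List.take_append_drop j L]
      rw [List.countP_append, hdrop, Nat.add_zero]
    have h2 : (L.take j).countP (fun x => decide (t ≤ x)) ≤ (L.take j).length :=
      List.countP_le_length
    have h3 : (L.take j).length = min j L.length := List.length_take
    omega
  · intro h
    have htake : (L.take (j+1)).countP (fun x => decide (t ≤ x)) = (L.take (j+1)).length := by
      rw [List.countP_eq_length]
      intro a ha
      obtain ⟨i, hi⟩ := List.mem_iff_get.mp ha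
      have hd1 : (i : ℕ) < (List.take (j+1) L).length := i.isLt
      have hd2 : (List.take (j+1) L).length = min (j+1) L.length := List.length_take
      have hi2 : i.1 < L.length := by omega
      have hij : i.1 < j + 1 := by omega
      have hget : (L.take (j+1)).get i = L.get ⟨i.1, hi2⟩ := by simp
      have hge : L.get ⟨i.1, hi2⟩ ≥ L.get ⟨j, hj⟩ := by
        apply hL.rel_get_of_le
        simp only [Fin.mk_le_mk]
        omega
      simp only [decide_eq_true_eq]
      rw [← hi, hget]
      linarith
    have hlen : (L.take (j+1)).length = min (j+1) L.length := List.length_take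
    have hsplit : L.countP (fun x => decide (t ≤ x)) =
        (L.take (j+1)).countP (fun x => decide (t ≤ x))
          + (L.drop (j+1)).countP (fun x => decide (t ≤ x)) := by
      conv_lhs => rw [← List.take_append_drop (j+1) L]
      rw [List.countP_append]
    omega

lemma Fg_sum {n : ℕ} (g : Fin n → ℝ) (f : ℝ → ℝ) :
    ∑ r ∈ Finset.Icc 1 n, f (sSup {t : ℝ | r ≤ Set.ncard {i : Fin n | t ≤ g i}})
      = ∑ i : Fin n, f (g i) := by
  classical
  set l : List ℝ := ((Finset.univ.val.map g)).sort (· ≥ ·) with hl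
  have hlcoe : (l : Multiset ℝ) = Finset.univ.val.map g := Multiset.sort_eq _ _
  have hlen : l.length = n := by rw [hl, Multiset.length_sort]; simp
  have hsorted : l.Pairwise (· ≥ ·) := Multiset.pairwise_sort _ _
  have hcount : ∀ t : ℝ, Set.ncard {i : Fin n | t ≤ g i}
      = l.countP (fun x => decide (t ≤ x)) := by
    intro t
    have h1 : {i : Fin n | t ≤ g i}.ncard = (Finset.univ.filter (fun i => t ≤ g i)).card := by
      rw [← Set.ncard_coe_finset]
      congr 1
      ext i; simp
    have h2 : (Finset.univ.filter (fun i => t ≤ g i)).card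
        = Multiset.countP (fun i => t ≤ g i) (Finset.univ.val : Multiset (Fin n)) := by
      rw [Multiset.countP_eq_card_filter]
      rfl
    have h3 : Multiset.countP (fun x => t ≤ x) ((Finset.univ.val : Multiset (Fin n)).map g)
        = Multiset.countP (fun i => t ≤ g i) (Finset.univ.val : Multiset (Fin n)) := by
      rw [Multiset.countP_map, Multiset.countP_eq_card_filter]
    have h4 : Multiset.countP (fun x => t ≤ x) (l : Multiset ℝ)
        = l.countP (fun x => decide (t ≤ x)) := Multiset.coe_countP _ _
    rw [h1, h2, ← h3, ← hlcoe, h4]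
  have hterm : ∀ r ∈ Finset.Icc 1 n,
      f (sSup {t : ℝ | r ≤ Set.ncard {i : Fin n | t ≤ g i}}) = f (l.getD (r-1) 0) := by
    intro r hr
    rw [Finset.mem_Icc] at hr
    have hjl : r - 1 < l.length := by omega
    have hset : {t : ℝ | r ≤ Set.ncard {i : Fin n | t ≤ g i}}
        = Set.Iic (l.get ⟨r-1, hjl⟩) := by
      ext t
      simp only [Set.mem_setOf_eq, Set.mem_Iic]
      rw [hcount t, ← sorted_countP_iff hsorted (r-1) hjl t]
      omega
    rw [hset, csSup_Iic, List.getD_eq_get (i := ⟨r-1, hjl⟩)]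
  rw [Finset.sum_congr rfl hterm]
  have hbij : ∑ r ∈ Finset.Icc 1 n, f (l.getD (r-1) 0)
      = ∑ j ∈ Finset.range n, f (l.getD j 0) := by
    apply Finset.sum_nbij' (i := fun r => r - 1) (j := fun j => j + 1)
    · intro a ha; rw [Finset.mem_Icc] at ha; rw [Finset.mem_range]; omega
    · intro a ha; rw [Finset.mem_range] at ha; rw [Finset.mem_Icc]; omega
    · intro a ha; rw [Finset.mem_Icc] at ha; omega
    · intro a ha; rw [Finset.mem_range] at ha; omega
    · intro a ha; rfl
  have hgen : ∀ (L : List ℝ), ∑ j ∈ Finset.range L.length, f (L.getD j 0) = (L.map f).sum := by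
    intro L
    rw [← Fin.sum_univ_eq_sum_range, ← Fin.sum_univ_fun_getElem L f]
    apply Fintype.sum_congr
    intro i
    rw [List.getD_eq_get (i := i)]
    rfl
  have hstep : ∑ j ∈ Finset.range n, f (l.getD j 0) = (l.map f).sum := by
    conv_lhs => rw [← hlen]
    exact hgen l
  rw [hbij, hstep]
  have hrhs : ∑ i : Fin n, f (g i)
      = (((Finset.univ.val : Multiset (Fin n)).map g).map f).sum := by
    rw [Finset.sum_eq_multiset_sum, Multiset.map_map]
    rfl
  rw [hrhs, ← hlcoe, Multiset.map_coe, Multiset.sum_coe]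

lemma one_div_sq_le (x : ℝ) (hx : 1 ≤ x) : 1/x^2 ≤ 2/x - 2/(x+1) := by
  have hx0 : 0 < x := by linarith
  have hx1 : 0 < x + 1 := by linarith
  have h : 2/x - 2/(x+1) = 2/(x*(x+1)) := by field_simp; ring
  rw [h, div_le_div_iff₀ (by positivity) (by positivity)]
  nlinarith

lemma sum_inv_sq_le' (m : ℕ) (hm : 1 ≤ m) : ∀ k : ℕ,
    ∑ j ∈ Finset.Icc m (m + k), (1:ℝ)/(j:ℝ)^2 ≤ 2/m - 2/(m + k + 1 : ℝ) := by
  intro k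
  induction k with
  | zero =>
    rw [Nat.add_zero, Finset.Icc_self, Finset.sum_singleton]
    have h1 : (1:ℝ) ≤ (m:ℝ) := by exact_mod_cast hm
    have := one_div_sq_le (m:ℝ) h1
    push_cast
    ring_nf at this ⊢
    linarith
  | succ k ih =>
    have h1 : (1:ℝ) ≤ ((m + k + 1 : ℕ) : ℝ) := by
      have : (1:ℕ) ≤ m + k + 1 := by omega
      exact_mod_cast this
    have hterm := one_div_sq_le ((m + k + 1 : ℕ) : ℝ) h1
    rw [show m + (k+1) = (m + k) + 1 by ring, Finset.sum_Icc_succ_top (by omega)]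
    have hsum := add_le_add ih hterm
    refine le_trans hsum ?_
    push_cast
    ring_nf
    exact le_refl _
    
lemma sum_inv_sq_le (m N : ℕ) (hm : 1 ≤ m) :
    ∑ j ∈ Finset.Icc m N, (1:ℝ)/(j:ℝ)^2 ≤ 2/m := by
  have hm' : (0:ℝ) < m := by exact_mod_cast hm
  rcases lt_or_ge N m with hNm | hmN
  · rw [Finset.Icc_eq_empty (by omega), Finset.sum_empty]
    positivity
  · obtain ⟨k, rfl⟩ := Nat.exists_eq_add_of_le hmN
    refine le_trans (sum_inv_sq_le' m hm k) ?_
    have : (0:ℝ) < (m:ℝ) + k + 1 := by positivity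
    have h2 : 0 < 2/((m:ℝ) + k + 1) := by positivity
    linarith



/-- The `r`-th largest singular value (1-indexed) of an `n × n` complex matrix. -/
noncomputable def sval {n : ℕ} (B : Matrix (Fin n) (Fin n) ℂ) (r : ℕ) : ℝ :=
  sSup {t : ℝ | r ≤ Set.ncard {i : Fin n |
    t ≤ Real.sqrt ((Matrix.isHermitian_conjTranspose_mul_self B).eigenvalues i)}}

set_option maxHeartbeats 2000000 in
/-- bound on the Stieltjes transform of the Hermitization at a purely
imaginary point.  If the singular values of `B` satisfy `s_{n−i}(B) ≥ ci/n` for all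
`i ≥ Ck`, and `w = i·(k/n)`, then the imaginary part of
`m_w = (1/(2n))·tr((H − w·Id)⁻¹)`, where `H = [[0,B],[Bᴴ,0]]`, equals
`(1/(2n)) Σ_{i=1}^n 2·Im(w)/(|w|² + s_i(B)²)` and is bounded by a constant `C'`
depending only on `c` and `C`. -/
theorem stmt19 (c C : ℝ) (hc : 0 < c) (hC : 0 < C) :
    ∃ C' : ℝ, ∀ (n k : ℕ), 1 ≤ k → k < n →
    ∀ B : Matrix (Fin n) (Fin n) ℂ,
      (∀ i : ℕ, C * k ≤ (i : ℝ) → i < n → c * i / n ≤ sval B (n - i)) →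
      (((1 : ℂ) / (2 * n)) * Matrix.trace
          ((Matrix.fromBlocks 0 B B.conjTranspose 0 -
            (Complex.I * ((k : ℂ) / n)) • (1 : Matrix (Fin n ⊕ Fin n) (Fin n ⊕ Fin n) ℂ))⁻¹)).im
        = (1 / (2 * n)) * ∑ i ∈ Finset.Icc 1 n,
            2 * (Complex.I * ((k : ℂ) / n)).im /
              (‖Complex.I * ((k : ℂ) / n)‖ ^ 2 + sval B i ^ 2) ∧
      (((1 : ℂ) / (2 * n)) * Matrix.trace
          ((Matrix.fromBlocks 0 B B.conjTranspose 0 -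
            (Complex.I * ((k : ℂ) / n)) • (1 : Matrix (Fin n ⊕ Fin n) (Fin n ⊕ Fin n) ℂ))⁻¹)).im
        ≤ C' := by
  refine ⟨2/(c^2*C) + C + 1, ?_⟩
  intro n k hk hkn B hsv
  have hn : 0 < n := by omega
  have hnR : (0:ℝ) < n := by exact_mod_cast hn
  have hkR : (0:ℝ) < k := by exact_mod_cast hk
  set t : ℝ := (k:ℝ)/n with htdef
  have ht : 0 < t := by positivity
  -- identify w with I * t
  have hw : Complex.I * ((k:ℂ)/n) = Complex.I * ((t:ℝ):ℂ) := by
    rw [htdef]; push_cast; ring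
  rw [hw]
  have him : (Complex.I * ((t:ℝ):ℂ)).im = t := by simp
  have habs : ‖Complex.I * ((t:ℝ):ℂ)‖ ^ 2 = t^2 := by
    rw [norm_mul, Complex.norm_I, Complex.norm_real, one_mul, Real.norm_eq_abs, sq_abs]
  rw [him, habs]
  -- trace computation
  obtain ⟨hY, hYtr⟩ := aux_inv_trace B t ht
  obtain ⟨hX0, _⟩ := aux_inv_trace Bᴴ t ht
  rw [conjTranspose_conjTranspose] at hX0
  have htreq := aux_trace_eq B t ht hX0 hY
  have hblock := aux_block B t hX0 hY
  rw [htreq, hYtr] at hblock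
  set lam : Fin n → ℝ := (Matrix.isHermitian_conjTranspose_mul_self B).eigenvalues with hlam
  have hlam0 : ∀ i, 0 ≤ lam i := fun i => Matrix.eigenvalues_conjTranspose_mul_self_nonneg B i
  set Sr : ℝ := ∑ i, (lam i + t^2)⁻¹ with hSr
  have hsum_cast : (∑ i, ((lam i : ℂ) + (t:ℂ)^2)⁻¹) = ((Sr : ℝ) : ℂ) := by
    rw [hSr]
    push_cast
    rfl
  rw [hsum_cast] at hblock
  have hposden : ∀ i : Fin n, 0 < lam i + t^2 := by
    intro i; have := hlam0 i; nlinarith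
  -- compute the imaginary part
  have hIm : (((1 : ℂ) / (2 * n)) * Matrix.trace
      ((Matrix.fromBlocks 0 B Bᴴ 0 -
        (Complex.I * ((t:ℝ):ℂ)) • (1 : Matrix (Fin n ⊕ Fin n) (Fin n ⊕ Fin n) ℂ))⁻¹)).im
      = 1/(2*(n:ℝ)) * (t * (2 * Sr)) := by
    rw [hblock]
    have : ((1 : ℂ) / (2 * n)) * (Complex.I * (t:ℂ) * ((Sr:ℂ) + (Sr:ℂ)))
        = Complex.I * ((1/(2*(n:ℝ)) * (t * (2 * Sr)) : ℝ) : ℂ) := by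
      push_cast
      ring
    rw [this]
    simp
  rw [hIm]
  -- the sum over sval
  have hFg := Fg_sum (fun i => Real.sqrt (lam i)) (fun x => 2*t/(t^2 + x^2))
  have hsvsum : (∑ i ∈ Finset.Icc 1 n, 2 * t / (t ^ 2 + sval B i ^ 2))
      = ∑ i : Fin n, 2*t/(t^2 + lam i) := by
    unfold sval
    rw [hFg]
    apply Finset.sum_congr rfl
    intro i _
    rw [Real.sq_sqrt (hlam0 i)]
  have hEq : 1/(2*(n:ℝ)) * (t * (2 * Sr))
      = (1 / (2 * (n:ℝ))) * ∑ i ∈ Finset.Icc 1 n, 2 * t / (t ^ 2 + sval B i ^ 2) := by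
    rw [hsvsum]
    congr 1
    rw [hSr, Finset.mul_sum, Finset.mul_sum]
    apply Finset.sum_congr rfl
    intro i _
    rw [add_comm (lam i) (t^2), eq_div_iff (by have := hposden i; nlinarith)]
    field_simp
    rw [div_self (by have := hposden i; nlinarith : t^2 + lam i ≠ 0)]
  constructor
  · rw [hEq]
  · rw [hEq]
    set M : ℕ := Nat.ceil (C * (k:ℝ)) with hM
    set m : ℕ := max 1 M with hm
    have hm1 : 1 ≤ m := le_max_left _ _
    have hmR : (1:ℝ) ≤ m := by exact_mod_cast hm1
    have hCkm : C * k ≤ (m:ℝ) := le_trans (Nat.le_ceil _) (by exact_mod_cast le_max_right 1 M)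
    have hCk0 : (0:ℝ) < C * k := by positivity
    have hpoint : ∀ r ∈ Finset.Icc 1 n, 2*t/(t^2 + sval B r^2) ≤
        (if C*(k:ℝ) ≤ ((n - r : ℕ):ℝ) then 2*(k:ℝ)*n/(c^2*((n-r:ℕ):ℝ)^2)
          else 2*(n:ℝ)/k) := by
      intro r hr
      rw [Finset.mem_Icc] at hr
      split_ifs with hgood
      · have h1 : (0:ℝ) < ((n-r:ℕ):ℝ) := lt_of_lt_of_le hCk0 hgood
        have h1' : 0 < n - r := by exact_mod_cast h1
        have hs := hsv (n - r) hgood (by omega)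
        rw [show n - (n-r) = r from by omega] at hs
        have hspos : (0:ℝ) < c * ((n-r:ℕ):ℝ) / n := by positivity
        have hs2 : (c * ((n-r:ℕ):ℝ)/n)^2 ≤ sval B r^2 := by nlinarith
        have hden : (0:ℝ) < (c * ((n-r:ℕ):ℝ)/n)^2 := by positivity
        calc 2*t/(t^2 + sval B r^2) ≤ 2*t/((c * ((n-r:ℕ):ℝ)/n)^2) := by
              apply div_le_div_of_nonneg_left (by positivity) hden (by nlinarith [sq_nonneg t])
          _ = 2*(k:ℝ)*n/(c^2*((n-r:ℕ):ℝ)^2) := by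
              rw [htdef]; field_simp
      · have hb : t^2 ≤ t^2 + sval B r^2 := by nlinarith [sq_nonneg (sval B r)]
        calc 2*t/(t^2 + sval B r^2) ≤ 2*t/t^2 :=
              div_le_div_of_nonneg_left (by positivity) (by positivity) hb
          _ = 2*(n:ℝ)/k := by rw [htdef]; field_simp
    have hsum1 := Finset.sum_le_sum hpoint
    set G := (Finset.Icc 1 n).filter (fun r => C*(k:ℝ) ≤ ((n - r : ℕ):ℝ)) with hG
    set Bad := (Finset.Icc 1 n).filter (fun r => ¬ (C*(k:ℝ) ≤ ((n - r : ℕ):ℝ))) with hBad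
    have hsplit : (∑ r ∈ Finset.Icc 1 n, if C*(k:ℝ) ≤ ((n - r : ℕ):ℝ)
          then 2*(k:ℝ)*n/(c^2*((n-r:ℕ):ℝ)^2) else 2*(n:ℝ)/k)
        = (∑ r ∈ G, 2*(k:ℝ)*n/(c^2*((n-r:ℕ):ℝ)^2)) + ∑ r ∈ Bad, 2*(n:ℝ)/k :=
      Finset.sum_ite _ _
    have hinj : ∀ x ∈ G, ∀ y ∈ G, n - x = n - y → x = y := by
      intro x hx y hy hxy
      rw [hG, Finset.mem_filter, Finset.mem_Icc] at hx hy
      omega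
    have hGim : ∑ r ∈ G, 2*(k:ℝ)*n/(c^2*((n-r:ℕ):ℝ)^2)
        = ∑ j ∈ G.image (fun r => n - r), 2*(k:ℝ)*n/(c^2*(j:ℝ)^2) :=
      (Finset.sum_image (f := fun j : ℕ => 2*(k:ℝ)*n/(c^2*(j:ℝ)^2)) hinj).symm
    have hGsub : G.image (fun r => n - r) ⊆ Finset.Icc m (n-1) := by
      intro j hj
      rw [Finset.mem_image] at hj
      obtain ⟨r, hrG, rfl⟩ := hj
      rw [hG, Finset.mem_filter, Finset.mem_Icc] at hrG
      obtain ⟨⟨hr1, hrn⟩, hgood⟩ := hrG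
      have h1 : 0 < n - r := by
        have := lt_of_lt_of_le hCk0 hgood
        exact_mod_cast this
      have h2 : M ≤ n - r := Nat.ceil_le.mpr hgood
      rw [Finset.mem_Icc]
      omega
    have hGbound : ∑ j ∈ G.image (fun r => n - r), 2*(k:ℝ)*n/(c^2*(j:ℝ)^2)
        ≤ ∑ j ∈ Finset.Icc m (n-1), 2*(k:ℝ)*n/(c^2*(j:ℝ)^2) :=
      Finset.sum_le_sum_of_subset_of_nonneg hGsub (fun j _ _ => by positivity)
    have hGbound2 : ∑ j ∈ Finset.Icc m (n-1), 2*(k:ℝ)*n/(c^2*(j:ℝ)^2)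
        ≤ (2*(k:ℝ)*n/c^2) * (2/m) := by
      have hterm : ∀ j ∈ Finset.Icc m (n-1), 2*(k:ℝ)*n/(c^2*(j:ℝ)^2)
          = (2*(k:ℝ)*n/c^2) * (1/(j:ℝ)^2) := by
        intro j hj
        rw [Finset.mem_Icc] at hj
        have hj1 : (1:ℕ) ≤ j := le_trans hm1 hj.1
        have hjR : (0:ℝ) < j := by exact_mod_cast hj1
        field_simp
      rw [Finset.sum_congr rfl hterm, ← Finset.mul_sum]
      exact mul_le_mul_of_nonneg_left (sum_inv_sq_le m (n-1) hm1) (by positivity)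
    have hBadsub : Bad ⊆ Finset.Icc (n+1-M) n := by
      intro r hr
      rw [hBad, Finset.mem_filter, Finset.mem_Icc] at hr
      obtain ⟨⟨hr1, hrn⟩, hbad⟩ := hr
      push_neg at hbad
      have h1 : ((n - r : ℕ):ℝ) < (M:ℝ) := lt_of_lt_of_le hbad (Nat.le_ceil _)
      have h2 : n - r < M := by exact_mod_cast h1
      rw [Finset.mem_Icc]; omega
    have hBadcard : Bad.card ≤ M := by
      calc Bad.card ≤ (Finset.Icc (n+1-M) n).card := Finset.card_le_card hBadsub
        _ = n + 1 - (n+1-M) := Nat.card_Icc _ _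
        _ ≤ M := by omega
    have hBadsum : ∑ r ∈ Bad, 2*(n:ℝ)/k ≤ (M:ℝ) * (2*(n:ℝ)/k) := by
      rw [Finset.sum_const, nsmul_eq_mul]
      exact mul_le_mul_of_nonneg_right (by exact_mod_cast hBadcard) (by positivity)
    have hchain : ∑ r ∈ Finset.Icc 1 n, 2*t/(t^2 + sval B r^2)
        ≤ (2*(k:ℝ)*n/c^2) * (2/m) + (M:ℝ)*(2*(n:ℝ)/k) := by
      rw [hsplit] at hsum1
      rw [hGim] at hsum1
      have := add_le_add (le_trans hGbound hGbound2) hBadsum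
      linarith
    have hpre : (0:ℝ) ≤ 1/(2*(n:ℝ)) := by positivity
    have hfin := mul_le_mul_of_nonneg_left hchain hpre
    have hmRpos : (0:ℝ) < m := by linarith
    have e1 : 1/(2*(n:ℝ)) * ((2*(k:ℝ)*n/c^2)*(2/m)) = 2*(k:ℝ)/(c^2*m) := by
      field_simp
    have e2 : 1/(2*(n:ℝ)) * ((M:ℝ)*(2*(n:ℝ)/k)) = (M:ℝ)/k := by
      field_simp
    have p1 : 2*(k:ℝ)/(c^2*m) ≤ 2/(c^2*C) := by
      rw [div_le_div_iff₀ (by positivity) (by positivity)]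
      have := mul_le_mul_of_nonneg_left hCkm (sq_nonneg c)
      nlinarith
    have p2 : (M:ℝ)/k ≤ C + 1 := by
      rw [div_le_iff₀ hkR]
      have hMk : (M:ℝ) < C*k + 1 := Nat.ceil_lt_add_one (by positivity)
      have hk1 : (1:ℝ) ≤ k := by exact_mod_cast hk
      nlinarith
    rw [mul_add, e1, e2] at hfin
    linarith
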